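/- Let X and Y be finite alphabets, let P be a probability distribution on X × Y with P(x,y) > 0 for all (x,y), and let ρ > 0. Then max_Q [ρ H_Q(X|Y) − D(Q‖P)] = log₂ ∑_{y∈Y} ( ∑_{x∈X} P(x,y)^{1/(1+ρ)} )^{1+ρ}, where the maximum is over all probability distributions Q on X × Y, H_Q(X|Y) = −∑_{x,y} Q(x,y) log₂( Q(x,y) / ∑_{x'} Q(x',y) ) is the conditional Shannon entropy, and D(Q‖P) = ∑_{x,y} Q(x,y) log₂(Q(x,y)/P(x,y)) is the Kullback–Leibler divergence of the joint distributions. -/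

import Mathlib

open Real Finset

/-- Log-sum inequality (Gibbs): `∑ aᵢ log(bᵢ/aᵢ) ≤ (∑a) log(∑b/∑a)`. -/
lemma logsum_aux {ι : Type*} [Fintype ι] (a b : ι → ℝ)
    (ha : ∀ i, 0 ≤ a i) (hb : ∀ i, 0 < b i) :
    ∑ i, a i * Real.log (b i / a i) ≤
      (∑ i, a i) * Real.log ((∑ i, b i) / (∑ i, a i)) := by
  by_cases hA : ∑ i, a i = 0
  · have h0 : ∀ i ∈ (univ : Finset ι), a i = 0 :=
      (Finset.sum_eq_zero_iff_of_nonneg (fun i _ => ha i)).mp hA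
    have h0' : ∀ i, a i = 0 := fun i => h0 i (mem_univ i)
    simp [h0', hA]
  · have hA' : 0 < ∑ i, a i :=
      lt_of_le_of_ne (Finset.sum_nonneg fun i _ => ha i) (Ne.symm hA)
    have hne : (univ : Finset ι).Nonempty := by
      rw [Finset.nonempty_iff_ne_empty]
      intro h
      rw [h] at hA
      simp at hA
    have hB' : 0 < ∑ i, b i := Finset.sum_pos (fun i _ => hb i) hne
    set A := ∑ i, a i with hAdef
    set B := ∑ i, b i with hBdef
    set t := univ.filter (fun i => a i ≠ 0) with ht
    have hLHS : ∑ i, a i * Real.log (b i / a i)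
        = ∑ i ∈ t, a i * Real.log (b i / a i) := by
      rw [ht]
      rw [Finset.sum_filter_of_ne]
      intro x _ hx
      intro hax
      exact hx (by rw [hax]; ring)
    have hAt : ∑ i ∈ t, a i = A := by
      rw [ht, Finset.sum_filter_of_ne]
      intro x _ hx
      exact hx
    have hterm : ∀ i ∈ t, a i * Real.log (b i / a i)
        ≤ a i * Real.log (B / A) + (A / B) * b i - a i := by
      intro i hi
      have hai : 0 < a i := lt_of_le_of_ne (ha i) (Ne.symm (by simpa [ht] using hi))
      have key : b i / a i = (B / A) * ((b i * A) / (a i * B)) := by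
        field_simp
      have hx1 : (0:ℝ) < B / A := div_pos hB' hA'
      have hx2 : (0:ℝ) < (b i * A) / (a i * B) :=
        div_pos (mul_pos (hb i) hA') (mul_pos hai hB')
      rw [key, Real.log_mul hx1.ne' hx2.ne']
      have h1 : Real.log ((b i * A) / (a i * B)) ≤ (b i * A) / (a i * B) - 1 :=
        Real.log_le_sub_one_of_pos hx2
      have h2 : a i * ((b i * A) / (a i * B) - 1) = A / B * b i - a i := by
        field_simp
      have h3 : a i * Real.log ((b i * A) / (a i * B)) ≤ A / B * b i - a i := by
        rw [← h2]
        exact mul_le_mul_of_nonneg_left h1 hai.le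
      nlinarith [h3]
    have hsum : ∑ i ∈ t, (a i * Real.log (B / A) + (A / B) * b i - a i)
        = A * Real.log (B / A) + (A / B) * (∑ i ∈ t, b i) - A := by
      rw [Finset.sum_sub_distrib, Finset.sum_add_distrib, ← Finset.sum_mul,
        ← Finset.mul_sum, hAt]
    have hbt : ∑ i ∈ t, b i ≤ B := by
      rw [hBdef]
      exact Finset.sum_le_sum_of_subset_of_nonneg (Finset.filter_subset _ _)
        (fun i _ _ => (hb i).le)
    calc ∑ i, a i * Real.log (b i / a i)
        = ∑ i ∈ t, a i * Real.log (b i / a i) := hLHS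
      _ ≤ ∑ i ∈ t, (a i * Real.log (B / A) + (A / B) * b i - a i) :=
          Finset.sum_le_sum hterm
      _ = A * Real.log (B / A) + (A / B) * (∑ i ∈ t, b i) - A := hsum
      _ ≤ A * Real.log (B / A) + (A / B) * B - A := by
          have : (A / B) * (∑ i ∈ t, b i) ≤ (A / B) * B :=
            mul_le_mul_of_nonneg_left hbt (by positivity)
          linarith
      _ = A * Real.log (B / A) := by
          field_simp
          ring

/-- Log-sum inequality in base-2 form. -/
lemma logbsum_aux {ι : Type*} [Fintype ι] (a b : ι → ℝ)
    (ha : ∀ i, 0 ≤ a i) (hb : ∀ i, 0 < b i) :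
    ∑ i, a i * Real.logb 2 (b i / a i) ≤
      (∑ i, a i) * Real.logb 2 ((∑ i, b i) / (∑ i, a i)) := by
  have h := logsum_aux a b ha hb
  have hlog2 : (0:ℝ) < Real.log 2 := Real.log_pos one_lt_two
  simp only [Real.logb, ← mul_div_assoc]
  rw [← Finset.sum_div]
  gcongr

/-- Side-information analogue of identity (3): for a joint distribution `P` on `X × Y`,
`max_Q [ρ H_Q(X|Y) − D(Q‖P)] = log₂ ∑_y (∑_x P(x,y)^{1/(1+ρ)})^{1+ρ}`,
i.e. `ρ` times Arikan's conditional Rényi entropy of order `1/(1+ρ)`. -/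
theorem conditional_guessing_exponent_eq_renyi
    {X Y : Type*} [Fintype X] [Fintype Y]
    (P : X × Y → ℝ) (hP : ∀ p, 0 < P p) (hPsum : ∑ p : X × Y, P p = 1)
    (ρ : ℝ) (hρ : 0 < ρ) :
    IsGreatest
      {e : ℝ | ∃ Q : X × Y → ℝ, (∀ p, 0 ≤ Q p) ∧ (∑ p : X × Y, Q p = 1) ∧
        e = ρ * (-∑ p : X × Y, Q p * Real.logb 2 (Q p / ∑ x' : X, Q (x', p.2))) -
              ∑ p : X × Y, Q p * Real.logb 2 (Q p / P p)}
      (Real.logb 2 (∑ y : Y, (∑ x : X, P (x, y) ^ (1 / (1 + ρ))) ^ (1 + ρ))) := by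
  classical
  have h1ρ : (0:ℝ) < 1 + ρ := by linarith
  have hXY : Nonempty (X × Y) := by
    by_contra h
    rw [not_nonempty_iff] at h
    rw [Finset.univ_eq_empty, Finset.sum_empty] at hPsum
    norm_num at hPsum
  have hX : Nonempty X := ⟨hXY.some.1⟩
  have hY : Nonempty Y := ⟨hXY.some.2⟩
  set β := 1 / (1 + ρ) with hβ
  set S : Y → ℝ := fun y => ∑ x, P (x, y) ^ β with hSdef
  have hS : ∀ y, 0 < S y := fun y =>
    Finset.sum_pos (fun x _ => Real.rpow_pos_of_pos (hP _) _) univ_nonempty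
  set Z := ∑ y, S y ^ (1 + ρ) with hZdef
  have hZ : 0 < Z := Finset.sum_pos (fun y _ => Real.rpow_pos_of_pos (hS y) _) univ_nonempty
  set Qs : X × Y → ℝ := fun p => P p ^ β * S p.2 ^ ρ / Z with hQsdef
  have hQs : ∀ p, 0 < Qs p := by
    intro p
    have h1 : 0 < P p ^ β := Real.rpow_pos_of_pos (hP p) _
    have h2 : 0 < S p.2 ^ ρ := Real.rpow_pos_of_pos (hS p.2) _
    positivity
  set W : Y → ℝ := fun y => S y ^ (1 + ρ) / Z with hWdef
  have hW : ∀ y, 0 < W y := by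
    intro y
    have h1 : 0 < S y ^ (1 + ρ) := Real.rpow_pos_of_pos (hS y) _
    positivity
  have hQsY : ∀ y, ∑ x, Qs (x, y) = W y := by
    intro y
    simp only [hQsdef, hWdef]
    rw [← Finset.sum_div, ← Finset.sum_mul]
    congr 1
    rw [Real.rpow_add (hS y), Real.rpow_one]
  have hQssum : ∑ p, Qs p = 1 := by
    rw [Fintype.sum_prod_type_right]
    simp only [hQsY]
    rw [hWdef]
    rw [← Finset.sum_div, ← hZdef, div_self hZ.ne']
  have hlog2 : (0:ℝ) < Real.log 2 := Real.log_pos one_lt_two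
  -- key identity
  have key : ∀ Q : X × Y → ℝ, (∀ p, 0 ≤ Q p) → (∑ p, Q p = 1) →
      ρ * (-∑ p : X × Y, Q p * Real.logb 2 (Q p / ∑ x' : X, Q (x', p.2))) -
        ∑ p : X × Y, Q p * Real.logb 2 (Q p / P p)
      = Real.logb 2 Z + (1 + ρ) * ∑ p : X × Y, Q p * Real.logb 2 (Qs p / Q p)
          + ρ * ∑ p : X × Y, Q p * Real.logb 2 ((∑ x' : X, Q (x', p.2)) / W p.2) := by
    intro Q hQ0 hQ1
    have hQY0 : ∀ p : X × Y, 0 < Q p → 0 < ∑ x' : X, Q (x', p.2) := by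
      intro p hp
      have h1 : Q (p.1, p.2) ≤ ∑ x', Q (x', p.2) :=
        Finset.single_le_sum (f := fun x' => Q (x', p.2)) (fun x _ => hQ0 _) (mem_univ p.1)
      have h2 : Q p = Q (p.1, p.2) := by rfl
      linarith [h2 ▸ hp]
    have hterm : ∀ p : X × Y,
        ρ * -(Q p * Real.logb 2 (Q p / ∑ x' : X, Q (x', p.2)))
          - Q p * Real.logb 2 (Q p / P p)
        = Q p * Real.logb 2 Z + (1 + ρ) * (Q p * Real.logb 2 (Qs p / Q p))
          + ρ * (Q p * Real.logb 2 ((∑ x' : X, Q (x', p.2)) / W p.2)) := by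
      intro p
      rcases eq_or_lt_of_le (hQ0 p) with h | h
      · simp [← h]
      · have hqy := hQY0 p h
        have hQsv : Real.log (Qs p) = β * Real.log (P p) + ρ * Real.log (S p.2)
            - Real.log Z := by
          simp only [hQsdef]
          have hx1 : (0:ℝ) < P p ^ β := Real.rpow_pos_of_pos (hP p) _
          have hx2 : (0:ℝ) < S p.2 ^ ρ := Real.rpow_pos_of_pos (hS p.2) _
          rw [Real.log_div (mul_pos hx1 hx2).ne' hZ.ne',
            Real.log_mul hx1.ne' hx2.ne',
            Real.log_rpow (hP p), Real.log_rpow (hS p.2)]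
        have hWv : Real.log (W p.2) = (1 + ρ) * Real.log (S p.2) - Real.log Z := by
          simp only [hWdef]
          rw [Real.log_div (Real.rpow_pos_of_pos (hS p.2) _).ne' hZ.ne',
            Real.log_rpow (hS p.2)]
        simp only [Real.logb]
        rw [Real.log_div h.ne' hqy.ne', Real.log_div h.ne' (hP p).ne',
          Real.log_div (hQs p).ne' h.ne', Real.log_div hqy.ne' (hW p.2).ne',
          hQsv, hWv, hβ]
        field_simp
        ring
    calc ρ * (-∑ p : X × Y, Q p * Real.logb 2 (Q p / ∑ x' : X, Q (x', p.2))) -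
          ∑ p : X × Y, Q p * Real.logb 2 (Q p / P p)
        = ∑ p : X × Y, (ρ * -(Q p * Real.logb 2 (Q p / ∑ x' : X, Q (x', p.2)))
            - Q p * Real.logb 2 (Q p / P p)) := by
          rw [Finset.sum_sub_distrib, ← Finset.mul_sum, ← Finset.sum_neg_distrib]
      _ = ∑ p : X × Y, (Q p * Real.logb 2 Z
            + (1 + ρ) * (Q p * Real.logb 2 (Qs p / Q p))
            + ρ * (Q p * Real.logb 2 ((∑ x' : X, Q (x', p.2)) / W p.2))) :=
          Finset.sum_congr rfl (fun p _ => hterm p)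
      _ = Real.logb 2 Z + (1 + ρ) * ∑ p : X × Y, Q p * Real.logb 2 (Qs p / Q p)
            + ρ * ∑ p : X × Y, Q p * Real.logb 2 ((∑ x' : X, Q (x', p.2)) / W p.2) := by
          rw [Finset.sum_add_distrib, Finset.sum_add_distrib, ← Finset.sum_mul, hQ1,
            one_mul, ← Finset.mul_sum, ← Finset.mul_sum]
  constructor
  · refine ⟨Qs, fun p => (hQs p).le, hQssum, ?_⟩
    rw [key Qs (fun p => (hQs p).le) hQssum]
    have e1 : ∀ p : X × Y, Qs p / Qs p = 1 := fun p => div_self (hQs p).ne'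
    have e2 : ∀ p : X × Y, (∑ x' : X, Qs (x', p.2)) / W p.2 = 1 := by
      intro p
      rw [hQsY p.2]
      exact div_self (hW p.2).ne'
    simp [e1, e2]
  · rintro e ⟨Q, hQ0, hQ1, rfl⟩
    rw [key Q hQ0 hQ1]
    set A := ∑ p : X × Y, Q p * Real.logb 2 (Qs p / Q p) with hAdef
    set B := ∑ p : X × Y, Q p * Real.logb 2 ((∑ x' : X, Q (x', p.2)) / W p.2) with hBdef
    have hA : A ≤ 0 := by
      have h := logbsum_aux Q Qs hQ0 hQs
      rw [hQ1, hQssum] at h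
      simpa using h
    have hBA : B ≤ -A := by
      have hAy : A = ∑ y : Y, ∑ x : X, Q (x, y) * Real.logb 2 (Qs (x, y) / Q (x, y)) := by
        rw [hAdef, Fintype.sum_prod_type_right]
      have hBy : B = ∑ y : Y, (∑ x : X, Q (x, y)) *
          Real.logb 2 ((∑ x : X, Q (x, y)) / W y) := by
        rw [hBdef, Fintype.sum_prod_type_right]
        exact Finset.sum_congr rfl (fun y _ =>
          (Finset.sum_mul Finset.univ (fun x => Q (x, y))
            (Real.logb 2 ((∑ x : X, Q (x, y)) / W y))).symm)
      have hstep : ∀ y : Y, ∑ x : X, Q (x, y) * Real.logb 2 (Qs (x, y) / Q (x, y))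
          ≤ (∑ x : X, Q (x, y)) * Real.logb 2 (W y / (∑ x : X, Q (x, y))) := by
        intro y
        have h := logbsum_aux (fun x => Q (x, y)) (fun x => Qs (x, y))
          (fun x => hQ0 _) (fun x => hQs _)
        rwa [hQsY y] at h
      have hneg : ∀ y : Y, (∑ x : X, Q (x, y)) * Real.logb 2 (W y / (∑ x : X, Q (x, y)))
          = -((∑ x : X, Q (x, y)) * Real.logb 2 ((∑ x : X, Q (x, y)) / W y)) := by
        intro y
        rw [show W y / (∑ x : X, Q (x, y)) = ((∑ x : X, Q (x, y)) / W y)⁻¹ from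
          (inv_div _ _).symm, Real.logb_inv]
        ring
      have : A ≤ -B := by
        rw [hAy, hBy, ← Finset.sum_neg_distrib]
        exact Finset.sum_le_sum (fun y _ => (hstep y).trans_eq (hneg y))
      linarith
    have hρB : ρ * B ≤ ρ * (-A) := mul_le_mul_of_nonneg_left hBA hρ.le
    nlinarith [hρB, hA]
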